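/- Let A be an n×n real symmetric matrix with all entries nonnegative, let z ∈ ℝⁿ be a vector with all entries nonnegative, and let t ≥ 1 be an integer. Then ⟨A^t z, z⟩ · ⟨z, z⟩^{t−1} ≥ ⟨A z, z⟩^t; in particular, if ⟨z, z⟩ = 1 then ⟨A^t z, z⟩ ≥ ⟨A z, z⟩^t. -/

import Mathlib

open Matrix Finset


private lemma amgm_aux (N : ℕ) (hN : N ≠ 0) (x : ℕ → ℝ) (hx : ∀ j ∈ Finset.range N, 0 ≤ x j)
    (y : ℝ) (hy : 0 ≤ y) (hp : ∏ j ∈ Finset.range N, x j = y ^ N) :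
    (N : ℝ) * y ≤ ∑ j ∈ Finset.range N, x j := by
  have hN' : (0:ℝ) < N := by
    have := Nat.pos_of_ne_zero hN
    exact_mod_cast this
  have h := Real.geom_mean_le_arith_mean_weighted (Finset.range N) (fun _ => (N:ℝ)⁻¹) x
      (fun i _ => by positivity) (by simp [Finset.sum_const, Finset.card_range]; field_simp) hx
  have hprod : (∏ j ∈ Finset.range N, x j ^ ((N:ℝ)⁻¹)) = y := by
    rw [Real.finset_prod_rpow _ _ hx, hp, ← Real.rpow_natCast y N, ← Real.rpow_mul hy]
    rw [mul_inv_cancel₀ (by positivity), Real.rpow_one]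
  rw [hprod] at h
  have h2 := mul_le_mul_of_nonneg_left h hN'.le
  calc (N:ℝ) * y ≤ (N:ℝ) * ∑ j ∈ Finset.range N, (N:ℝ)⁻¹ * x j := h2
    _ = ∑ j ∈ Finset.range N, x j := by
        rw [← Finset.mul_sum, ← mul_assoc, mul_inv_cancel₀ hN'.ne', one_mul]


private def pairX (a : ℝ) (b c : ℕ → ℝ) : ℕ → ℝ := fun j =>
  if j = 0 then a else if Odd j then b ((j - 1) / 2) else c ((j - 1) / 2)

private lemma pairX_prod (a : ℝ) (b c : ℕ → ℝ) (m : ℕ) :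
    ∏ j ∈ Finset.range (2 * m + 1), pairX a b c j = a * ∏ k ∈ Finset.range m, (b k * c k) := by
  induction m with
  | zero => simp [pairX]
  | succ m ih =>
      have h1 : 2 * (m + 1) + 1 = (2 * m + 1) + 1 + 1 := by ring
      rw [h1, Finset.prod_range_succ, Finset.prod_range_succ, ih]
      have hodd : Odd (2 * m + 1) := ⟨m, by ring⟩
      have hnodd : ¬ Odd (2 * m + 1 + 1) := by simp [Nat.odd_iff, Nat.add_mod, Nat.mul_mod]
      have e1 : pairX a b c (2 * m + 1) = b m := by
        simp only [pairX, if_neg (by omega : ¬ (2 * m + 1 = 0)), if_pos hodd]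
        congr 1; omega
      have e2 : pairX a b c (2 * m + 1 + 1) = c m := by
        simp only [pairX, if_neg (by omega : ¬ (2 * m + 1 + 1 = 0)), if_neg hnodd]
        congr 1; omega
      rw [e1, e2, Finset.prod_range_succ]
      ring

private lemma pairX_sum (a : ℝ) (b c : ℕ → ℝ) (m : ℕ) :
    ∑ j ∈ Finset.range (2 * m + 1), pairX a b c j = a + ∑ k ∈ Finset.range m, (b k + c k) := by
  induction m with
  | zero => simp [pairX]
  | succ m ih =>
      have h1 : 2 * (m + 1) + 1 = (2 * m + 1) + 1 + 1 := by ring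
      rw [h1, Finset.sum_range_succ, Finset.sum_range_succ, ih]
      have hodd : Odd (2 * m + 1) := ⟨m, by ring⟩
      have hnodd : ¬ Odd (2 * m + 1 + 1) := by simp [Nat.odd_iff, Nat.add_mod, Nat.mul_mod]
      have e1 : pairX a b c (2 * m + 1) = b m := by
        simp only [pairX, if_neg (by omega : ¬ (2 * m + 1 = 0)), if_pos hodd]
        congr 1; omega
      have e2 : pairX a b c (2 * m + 1 + 1) = c m := by
        simp only [pairX, if_neg (by omega : ¬ (2 * m + 1 + 1 = 0)), if_neg hnodd]
        congr 1; omega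
      rw [e1, e2, Finset.sum_range_succ]
      ring


set_option maxHeartbeats 1000000 in

private lemma core (n : ℕ) (hn : 0 < n) (A : Matrix (Fin n) (Fin n) ℝ) (z : Fin n → ℝ)
    (hA : Aᵀ = A) (hApos : ∀ i j, 0 < A i j) (hz : ∀ i, 0 < z i) :
    ∀ t : ℕ, 1 ≤ t →
      ((A *ᵥ z) ⬝ᵥ z) ^ t ≤ (((A ^ t) *ᵥ z) ⬝ᵥ z) * (z ⬝ᵥ z) ^ (t - 1) := by
  have hne : Nonempty (Fin n) := Fin.pos_iff_nonempty.mp hn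
  set w : ℕ → Fin n → ℝ := fun k => (A ^ k) *ᵥ z with hwdef
  have hw0 : w 0 = z := by simp [hwdef, Matrix.one_mulVec]
  have hwsucc : ∀ k, w (k + 1) = A *ᵥ w k := by
    intro k
    simp only [hwdef]
    rw [pow_succ']
    exact (Matrix.mulVec_mulVec z A (A ^ k)).symm
  have hwentry : ∀ k i, w (k + 1) i = ∑ j, A i j * w k j := by
    intro k i
    rw [hwsucc k]
    simp [Matrix.mulVec, dotProduct]
  have hwpos : ∀ k i, 0 < w k i := by
    intro k
    induction k with
    | zero => intro i; rw [hw0]; exact hz i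
    | succ k ih =>
        intro i
        rw [hwentry k i]
        exact Finset.sum_pos (fun j _ => mul_pos (hApos i j) (ih j)) Finset.univ_nonempty
  have hAe : ∀ i j, A j i = A i j := by
    intro i j
    have h := congrFun (congrFun hA i) j
    simpa [Matrix.transpose_apply] using h
  have hsymmpow : ∀ k : ℕ, (A ^ k)ᵀ = A ^ k := by
    intro k; rw [Matrix.transpose_pow, hA]
  have hswap : ∀ (k : ℕ) (u v : Fin n → ℝ), ((A ^ k) *ᵥ u) ⬝ᵥ v = u ⬝ᵥ ((A ^ k) *ᵥ v) := by
    intro k u v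
    calc ((A ^ k) *ᵥ u) ⬝ᵥ v = ((A ^ k)ᵀ *ᵥ u) ⬝ᵥ v := by rw [hsymmpow]
      _ = (u ᵥ* (A ^ k)) ⬝ᵥ v := by rw [Matrix.mulVec_transpose]
      _ = u ⬝ᵥ ((A ^ k) *ᵥ v) := (Matrix.dotProduct_mulVec u (A ^ k) v).symm
  have hst : ∀ a b : ℕ, ((A ^ (a + b)) *ᵥ z) ⬝ᵥ z = (w a) ⬝ᵥ (w b) := by
    intro a b
    rw [pow_add, ← Matrix.mulVec_mulVec, hswap a ((A ^ b) *ᵥ z) z, dotProduct_comm]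
  have hσ : z ⬝ᵥ z = ∑ i, z i * z i := rfl
  have hσpos : 0 < z ⬝ᵥ z := Finset.sum_pos (fun i _ => mul_pos (hz i) (hz i)) Finset.univ_nonempty
  have hs1 : (A *ᵥ z) ⬝ᵥ z = ∑ i, ∑ j, A i j * (z i * z j) := by
    simp only [dotProduct, Matrix.mulVec, Finset.sum_mul]
    exact Finset.sum_congr rfl fun i _ => Finset.sum_congr rfl fun j _ => by ring
  have hs1pos : 0 < (A *ᵥ z) ⬝ᵥ z := by
    rw [hs1]
    exact Finset.sum_pos (fun i _ => Finset.sum_pos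
      (fun j _ => mul_pos (hApos i j) (mul_pos (hz i) (hz j))) Finset.univ_nonempty)
      Finset.univ_nonempty
  intro t
  induction t using Nat.strong_induction_on with
  | _ t IH =>
  intro ht
  rcases Nat.even_or_odd t with he | ho
  · -- even case via Cauchy-Schwarz and induction
    obtain ⟨k, hk⟩ := he
    have hk1 : 1 ≤ k := by omega
    have hkt : k < t := by omega
    have ihk := IH k hkt hk1
    have hcs : ((A ^ k *ᵥ z) ⬝ᵥ z) ^ 2 ≤ (((A ^ t) *ᵥ z) ⬝ᵥ z) * (z ⬝ᵥ z) := by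
      have h2 : ((A ^ t) *ᵥ z) ⬝ᵥ z = ∑ i, (w k i) ^ 2 := by
        rw [hk, hst k k]
        simp [dotProduct, sq]
      have h1 : (A ^ k *ᵥ z) ⬝ᵥ z = ∑ i, w k i * z i := rfl
      have h3 : z ⬝ᵥ z = ∑ i, (z i) ^ 2 := by rw [hσ]; simp [sq]
      rw [h1, h2, h3]
      exact Finset.sum_mul_sq_le_sq_mul_sq Finset.univ (w k) z
    have e1 : t = k * 2 := by omega
    calc ((A *ᵥ z) ⬝ᵥ z) ^ t = (((A *ᵥ z) ⬝ᵥ z) ^ k) ^ 2 := by rw [← pow_mul, ← e1]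
      _ ≤ (((A ^ k *ᵥ z) ⬝ᵥ z) * (z ⬝ᵥ z) ^ (k - 1)) ^ 2 :=
          pow_le_pow_left₀ (pow_nonneg hs1pos.le k) ihk 2
      _ = ((A ^ k *ᵥ z) ⬝ᵥ z) ^ 2 * ((z ⬝ᵥ z) ^ (k - 1)) ^ 2 := by ring
      _ ≤ ((((A ^ t) *ᵥ z) ⬝ᵥ z) * (z ⬝ᵥ z)) * ((z ⬝ᵥ z) ^ (k - 1)) ^ 2 :=
          mul_le_mul_of_nonneg_right hcs (by positivity)
      _ = (((A ^ t) *ᵥ z) ⬝ᵥ z) * (z ⬝ᵥ z) ^ (t - 1) := by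
          rw [← pow_mul, mul_assoc, ← pow_succ']
          congr 2
          omega
  · obtain ⟨m, hm⟩ := ho
    subst hm
    -- the middle vector u = A^m z  and τ = ⟨A u, u⟩ = s_t
    set u : Fin n → ℝ := w m with hu
    have hupos : ∀ i, 0 < u i := hwpos m
    set τ : ℝ := ∑ i, ∑ j, A i j * (u i * u j) with hτ
    have hτ_st : ((A ^ (2 * m + 1)) *ᵥ z) ⬝ᵥ z = τ := by
      have h1 : 2 * m + 1 = m + (m + 1) := by omega
      rw [h1, hst m (m + 1)]
      show ∑ i, w m i * w (m + 1) i = τ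
      rw [hτ]
      refine Finset.sum_congr rfl fun i _ => ?_
      rw [hwentry m i, Finset.mul_sum]
      exact Finset.sum_congr rfl fun j _ => by rw [hu]; ring
    have hτpos : 0 < τ := by
      rw [hτ]
      exact Finset.sum_pos (fun i _ => Finset.sum_pos
        (fun j _ => mul_pos (hApos i j) (mul_pos (hupos i) (hupos j))) Finset.univ_nonempty)
        Finset.univ_nonempty
    -- the t-th root r of τ/σ
    set r : ℝ := (τ / (z ⬝ᵥ z)) ^ (((2 * m + 1 : ℕ) : ℝ))⁻¹ with hr
    have hrpos : 0 < r := Real.rpow_pos_of_pos (div_pos hτpos hσpos) _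
    have hrt : r ^ (2 * m + 1) = τ / (z ⬝ᵥ z) :=
      Real.rpow_inv_natCast_pow (div_pos hτpos hσpos).le (by omega)
    -- telescoping
    have htel : ∀ (M : ℕ) (i : Fin n), ∏ k ∈ Finset.range M, (w k i / w (k + 1) i) = z i / w M i := by
      intro M i
      induction M with
      | zero => simp [hw0, div_self (hz i).ne']
      | succ M ih =>
          rw [Finset.prod_range_succ, ih, div_mul_div_comm,
            mul_comm (w M i) (w (M + 1) i), mul_div_mul_right _ _ (hwpos M i).ne']
    -- per-pair AM-GM
    have key : ∀ i j : Fin n, ((2 * m + 1 : ℕ) : ℝ) * (z i * z j) ≤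
        u i * u j / r ^ (2 * m) +
        ∑ k ∈ Finset.range m,
          (z i * z i * w k j / w (k + 1) i * r + z j * z j * w k i / w (k + 1) j * r) := by
      intro i j
      have hb : ∀ k, 0 ≤ z i * z i * w k j / w (k + 1) i * r :=
        fun k => mul_nonneg (div_nonneg
          (mul_nonneg (mul_nonneg (hz i).le (hz i).le) (hwpos k j).le) (hwpos (k + 1) i).le) hrpos.le
      have hc : ∀ k, 0 ≤ z j * z j * w k i / w (k + 1) j * r :=
        fun k => mul_nonneg (div_nonneg
          (mul_nonneg (mul_nonneg (hz j).le (hz j).le) (hwpos k i).le) (hwpos (k + 1) j).le) hrpos.le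
      have ha : 0 ≤ u i * u j / r ^ (2 * m) :=
        div_nonneg (mul_nonneg (hupos i).le (hupos j).le) (pow_nonneg hrpos.le _)
      have hx : ∀ j' ∈ Finset.range (2 * m + 1), 0 ≤ pairX (u i * u j / r ^ (2 * m))
          (fun k => z i * z i * w k j / w (k + 1) i * r)
          (fun k => z j * z j * w k i / w (k + 1) j * r) j' := by
        intro j' _
        unfold pairX
        split_ifs
        · exact ha
        · exact hb _
        · exact hc _
      have hp : (∏ j' ∈ Finset.range (2 * m + 1), pairX (u i * u j / r ^ (2 * m))
          (fun k => z i * z i * w k j / w (k + 1) i * r)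
          (fun k => z j * z j * w k i / w (k + 1) j * r) j') = (z i * z j) ^ (2 * m + 1) := by
        rw [pairX_prod]
        have hbc : ∀ k ∈ Finset.range m,
            (z i * z i * w k j / w (k + 1) i * r) * (z j * z j * w k i / w (k + 1) j * r)
            = ((z i * z i) * (z j * z j) * (r * r)) *
                ((w k i / w (k + 1) i) * (w k j / w (k + 1) j)) := fun k _ => by ring
        rw [Finset.prod_congr rfl hbc, Finset.prod_mul_distrib, Finset.prod_const,
          Finset.card_range, Finset.prod_mul_distrib, htel m i, htel m j]
        have h2 : ((z i * z i) * (z j * z j) * (r * r)) ^ m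
            = z i ^ (2 * m) * z j ^ (2 * m) * r ^ (2 * m) := by
          rw [mul_pow, mul_pow, show z i * z i = z i ^ 2 by ring,
            show z j * z j = z j ^ 2 by ring, show r * r = r ^ 2 by ring,
            ← pow_mul, ← pow_mul, ← pow_mul]
        rw [h2]
        have e1 : z i ≠ 0 := (hz i).ne'
        have e2 : z j ≠ 0 := (hz j).ne'
        have e3 : u i ≠ 0 := (hupos i).ne'
        have e4 : u j ≠ 0 := (hupos j).ne'
        have e5 : r ≠ 0 := hrpos.ne'
        have e6 : w m i ≠ 0 := (hwpos m i).ne'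
        have e7 : w m j ≠ 0 := (hwpos m j).ne'
        field_simp
        ring
      have := amgm_aux (2 * m + 1) (by omega) _ hx (z i * z j)
        (mul_nonneg (hz i).le (hz j).le) hp
      rwa [pairX_sum] at this
    -- aggregate sums
    have hPinner : ∀ k (i : Fin n),
        ∑ j, A i j * (z i * z i * w k j / w (k + 1) i * r) = z i * z i * r := by
      intro k i
      have h1 : ∀ j ∈ Finset.univ, A i j * (z i * z i * w k j / w (k + 1) i * r)
          = (z i * z i * r / w (k + 1) i) * (A i j * w k j) := fun j _ => by ring
      rw [Finset.sum_congr rfl h1, ← Finset.mul_sum, ← hwentry k i,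
        div_mul_cancel₀ _ (hwpos (k + 1) i).ne']
    have hP : ∀ k, ∑ i, ∑ j, A i j * (z i * z i * w k j / w (k + 1) i * r) = (z ⬝ᵥ z) * r := by
      intro k
      rw [Finset.sum_congr rfl fun i _ => hPinner k i, hσ, Finset.sum_mul]
    have hQ : ∀ k, ∑ i, ∑ j, A i j * (z j * z j * w k i / w (k + 1) j * r) = (z ⬝ᵥ z) * r := by
      intro k
      rw [Finset.sum_comm]
      have hcol : ∀ p : Fin n,
          ∑ q, A q p * (z p * z p * w k q / w (k + 1) p * r) = z p * z p * r := by
        intro p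
        have h1 : ∀ q ∈ Finset.univ, A q p * (z p * z p * w k q / w (k + 1) p * r)
            = A p q * (z p * z p * w k q / w (k + 1) p * r) := fun q _ => by rw [hAe p q]
        rw [Finset.sum_congr rfl h1]
        exact hPinner k p
      rw [Finset.sum_congr rfl fun p _ => hcol p, hσ, Finset.sum_mul]
    have hTau : ∑ i, ∑ j, A i j * (u i * u j / r ^ (2 * m)) = τ / r ^ (2 * m) := by
      rw [hτ, Finset.sum_div]
      refine Finset.sum_congr rfl fun i _ => ?_
      rw [Finset.sum_div]
      exact Finset.sum_congr rfl fun j _ => by ring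
    have hτr : τ / r ^ (2 * m) = (z ⬝ᵥ z) * r := by
      have hτeq : τ = (z ⬝ᵥ z) * r ^ (2 * m + 1) := by
        rw [hrt]
        field_simp
      rw [hτeq, pow_succ]
      field_simp
    have main : ((2 * m + 1 : ℕ) : ℝ) * ((A *ᵥ z) ⬝ᵥ z)
        ≤ ((2 * m + 1 : ℕ) : ℝ) * ((z ⬝ᵥ z) * r) := by
      have step1 : ((2 * m + 1 : ℕ) : ℝ) * ((A *ᵥ z) ⬝ᵥ z)
          = ∑ i, ∑ j, A i j * (((2 * m + 1 : ℕ) : ℝ) * (z i * z j)) := by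
        rw [hs1, Finset.mul_sum]
        refine Finset.sum_congr rfl fun i _ => ?_
        rw [Finset.mul_sum]
        exact Finset.sum_congr rfl fun j _ => by ring
      have step2 : ∑ i, ∑ j, A i j * (((2 * m + 1 : ℕ) : ℝ) * (z i * z j))
          ≤ ∑ i, ∑ j, A i j * (u i * u j / r ^ (2 * m) +
              ∑ k ∈ Finset.range m,
                (z i * z i * w k j / w (k + 1) i * r + z j * z j * w k i / w (k + 1) j * r)) :=
        Finset.sum_le_sum fun i _ => Finset.sum_le_sum fun j _ =>
          mul_le_mul_of_nonneg_left (key i j) (hApos i j).le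
      have expand : ∀ i j : Fin n, A i j * (u i * u j / r ^ (2 * m) +
              ∑ k ∈ Finset.range m,
                (z i * z i * w k j / w (k + 1) i * r + z j * z j * w k i / w (k + 1) j * r))
          = A i j * (u i * u j / r ^ (2 * m)) + ∑ k ∈ Finset.range m,
              (A i j * (z i * z i * w k j / w (k + 1) i * r)
                + A i j * (z j * z j * w k i / w (k + 1) j * r)) := by
        intro i j
        rw [mul_add, Finset.mul_sum]
        congr 1
        exact Finset.sum_congr rfl fun k _ => by ring
      have step3 : ∑ i, ∑ j, A i j * (u i * u j / r ^ (2 * m) +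
              ∑ k ∈ Finset.range m,
                (z i * z i * w k j / w (k + 1) i * r + z j * z j * w k i / w (k + 1) j * r))
          = τ / r ^ (2 * m) + ∑ k ∈ Finset.range m, ((z ⬝ᵥ z) * r + (z ⬝ᵥ z) * r) := by
        rw [Finset.sum_congr rfl fun i _ => Finset.sum_congr rfl fun j _ => expand i j]
        rw [Finset.sum_congr rfl fun i _ => Finset.sum_add_distrib, Finset.sum_add_distrib, hTau]
        congr 1
        rw [Finset.sum_congr rfl fun i _ => Finset.sum_comm, Finset.sum_comm]
        refine Finset.sum_congr rfl fun k _ => ?_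
        rw [Finset.sum_congr rfl fun i _ => Finset.sum_add_distrib, Finset.sum_add_distrib,
          hP k, hQ k]
      calc ((2 * m + 1 : ℕ) : ℝ) * ((A *ᵥ z) ⬝ᵥ z)
          = ∑ i, ∑ j, A i j * (((2 * m + 1 : ℕ) : ℝ) * (z i * z j)) := step1
        _ ≤ _ := step2
        _ = τ / r ^ (2 * m) + ∑ k ∈ Finset.range m, ((z ⬝ᵥ z) * r + (z ⬝ᵥ z) * r) := step3
        _ = ((2 * m + 1 : ℕ) : ℝ) * ((z ⬝ᵥ z) * r) := by
            rw [hτr, Finset.sum_const, Finset.card_range, nsmul_eq_mul]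
            push_cast
            ring
    have hT : (0:ℝ) < ((2 * m + 1 : ℕ) : ℝ) := by
      have : 0 < 2 * m + 1 := by omega
      exact_mod_cast this
    have hfin : (A *ᵥ z) ⬝ᵥ z ≤ (z ⬝ᵥ z) * r := le_of_mul_le_mul_left main hT
    calc ((A *ᵥ z) ⬝ᵥ z) ^ (2 * m + 1) ≤ ((z ⬝ᵥ z) * r) ^ (2 * m + 1) :=
          pow_le_pow_left₀ hs1pos.le hfin _
      _ = (z ⬝ᵥ z) ^ (2 * m + 1) * (τ / (z ⬝ᵥ z)) := by rw [mul_pow, hrt]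
      _ = τ * (z ⬝ᵥ z) ^ (2 * m) := by
          rw [pow_succ]
          field_simp
      _ = (((A ^ (2 * m + 1)) *ᵥ z) ⬝ᵥ z) * (z ⬝ᵥ z) ^ (2 * m + 1 - 1) := by
          rw [hτ_st, Nat.add_sub_cancel]

set_option maxHeartbeats 1000000 in
/-- The Mulholland–Smith / Blakley–Roy Hölder-type inequality: for an entrywise nonnegative
symmetric matrix `A` and an entrywise nonnegative vector `z`,
`⟨Aᵗz, z⟩·⟨z,z⟩^(t-1) ≥ ⟨Az, z⟩ᵗ`; in particular `⟨Aᵗz, z⟩ ≥ ⟨Az, z⟩ᵗ` when `⟨z,z⟩ = 1`. -/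
theorem blakley_roy (n t : ℕ) (ht : 1 ≤ t)
    (A : Matrix (Fin n) (Fin n) ℝ) (z : Fin n → ℝ)
    (hA : A.IsSymm) (hAnn : ∀ i j, 0 ≤ A i j) (hz : ∀ i, 0 ≤ z i) :
    ((A *ᵥ z) ⬝ᵥ z) ^ t ≤ (((A ^ t) *ᵥ z) ⬝ᵥ z) * (z ⬝ᵥ z) ^ (t - 1) ∧
    (z ⬝ᵥ z = 1 → ((A *ᵥ z) ⬝ᵥ z) ^ t ≤ ((A ^ t) *ᵥ z) ⬝ᵥ z) := by
  have part1 : ((A *ᵥ z) ⬝ᵥ z) ^ t ≤ (((A ^ t) *ᵥ z) ⬝ᵥ z) * (z ⬝ᵥ z) ^ (t - 1) := by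
    rcases Nat.eq_zero_or_pos n with h0 | hn
    · subst h0
      simp [dotProduct, zero_pow (show t ≠ 0 by omega)]
    · set J : Matrix (Fin n) (Fin n) ℝ := Matrix.of fun _ _ => (1 : ℝ) with hJ
      set o : Fin n → ℝ := fun _ => (1 : ℝ) with ho
      set F : ℝ → ℝ := fun ε =>
        ((((A + ε • J) ^ t) *ᵥ (z + ε • o)) ⬝ᵥ (z + ε • o))
            * ((z + ε • o) ⬝ᵥ (z + ε • o)) ^ (t - 1)
          - (((A + ε • J) *ᵥ (z + ε • o)) ⬝ᵥ (z + ε • o)) ^ t with hF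
      have hCA : Continuous fun ε : ℝ => A + ε • J :=
        continuous_const.add (continuous_id.smul continuous_const)
      have hCz : Continuous fun ε : ℝ => z + ε • o :=
        continuous_const.add (continuous_id.smul continuous_const)
      have hCpow : ∀ k : ℕ, Continuous fun ε : ℝ => (A + ε • J) ^ k := by
        intro k
        induction k with
        | zero => simp only [pow_zero]; exact continuous_const
        | succ k ih =>
            simp only [pow_succ]
            exact ih.matrix_mul hCA
      have hcont : Continuous F := by
        apply Continuous.sub
        · exact (((hCpow t).matrix_mulVec hCz).dotProduct hCz).mul
            ((hCz.dotProduct hCz).pow _)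
        · exact ((hCA.matrix_mulVec hCz).dotProduct hCz).pow _
      have hpos : ∀ ε ∈ Set.Ioi (0 : ℝ), 0 ≤ F ε := by
        intro ε hε
        have hε' : (0 : ℝ) < ε := hε
        have hsym : (A + ε • J)ᵀ = A + ε • J := by
          have hJsym : Jᵀ = J := by
            ext i j
            simp [hJ, ho]
          rw [Matrix.transpose_add, Matrix.transpose_smul, hJsym, hA.eq]
        have hApos : ∀ i j, 0 < (A + ε • J) i j := by
          intro i j
          simp only [Matrix.add_apply, Matrix.smul_apply, hJ, ho, Matrix.of_apply,
            smul_eq_mul, mul_one]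
          exact add_pos_of_nonneg_of_pos (hAnn i j) hε'
        have hzpos : ∀ i, 0 < (z + ε • o) i := by
          intro i
          simp only [Pi.add_apply, Pi.smul_apply, ho, hJ, smul_eq_mul, mul_one]
          exact add_pos_of_nonneg_of_pos (hz i) hε'
        have := core n hn (A + ε • J) (z + ε • o) hsym hApos hzpos t ht
        simp only [hF]
        linarith
      have h0 : 0 ≤ F 0 :=
        ge_of_tendsto ((hcont.tendsto 0).mono_left nhdsWithin_le_nhds)
          (eventually_nhdsWithin_of_forall hpos)
      have hF0 : F 0 = (((A ^ t) *ᵥ z) ⬝ᵥ z) * (z ⬝ᵥ z) ^ (t - 1)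
          - ((A *ᵥ z) ⬝ᵥ z) ^ t := by
        simp [hF]
      rw [hF0] at h0
      linarith
  refine ⟨part1, fun h1 => ?_⟩
  calc ((A *ᵥ z) ⬝ᵥ z) ^ t ≤ (((A ^ t) *ᵥ z) ⬝ᵥ z) * (z ⬝ᵥ z) ^ (t - 1) := part1
    _ = ((A ^ t) *ᵥ z) ⬝ᵥ z := by rw [h1, one_pow, mul_one]
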